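/- Let X and Y be spectral spaces and f : X → Y a continuous open map such that the preimage under f of every quasi-compact open subset of Y is quasi-compact, and such that for every y ∈ Y the fiber f⁻¹(y) is a finite and discrete subspace of X. Then for every constructible subset L of X, the image f(L) is a constructible subset of Y. -/

import Mathlib

/-- A subset of a topological space is constructible if it belongs to the Boolean algebra
of subsets generated by the retrocompact open sets. -/
inductive IsCons {X : Type*} [TopologicalSpace X] : Set X → Prop
  | retroOpen (U : Set X) (hU : IsOpen U)
      (hretro : ∀ V : Set X, IsOpen V → IsCompact V → IsCompact (U ∩ V)) : IsCons U
  | compl (s : Set X) : IsCons s → IsCons sᶜ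
  | union (s t : Set X) : IsCons s → IsCons t → IsCons (s ∪ t)

open Set Topology TopologicalSpace

section Aux

variable {X Y : Type*} [TopologicalSpace X] [TopologicalSpace Y]

lemma isCons_of_qc [QuasiSeparatedSpace X] {U : Set X} (hUo : IsOpen U) (hUc : IsCompact U) :
    IsCons U :=
  IsCons.retroOpen U hUo fun V hVo hVc =>
    QuasiSeparatedSpace.inter_isCompact U V hUo hUc hVo hVc

lemma isCons_empty : IsCons (∅ : Set X) :=
  IsCons.retroOpen ∅ isOpen_empty fun V _ _ => by simpa using isCompact_empty

lemma isCons_univ [CompactSpace X] : IsCons (univ : Set X) :=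
  IsCons.retroOpen univ isOpen_univ fun V hVo hVc => by simpa using hVc

lemma IsCons.inter {s t : Set X} (hs : IsCons s) (ht : IsCons t) : IsCons (s ∩ t) := by
  have h : s ∩ t = (sᶜ ∪ tᶜ)ᶜ := by simp
  rw [h]
  exact IsCons.compl _ (IsCons.union _ _ (IsCons.compl _ hs) (IsCons.compl _ ht))

/-- The class of finite unions of differences of quasi-compact opens. -/
inductive NF {X : Type*} [TopologicalSpace X] : Set X → Prop
  | basic (U V : Set X) : IsOpen U → IsCompact U → IsOpen V → IsCompact V → NF (U \ V)
  | union (s t : Set X) : NF s → NF t → NF (s ∪ t)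

lemma NF.inter [QuasiSeparatedSpace X] {s t : Set X} (hs : NF s) (ht : NF t) :
    NF (s ∩ t) := by
  induction hs generalizing t with
  | basic U V hUo hUc hVo hVc =>
    induction ht with
    | basic U' V' hUo' hUc' hVo' hVc' =>
      have h : (U \ V) ∩ (U' \ V') = (U ∩ U') \ (V ∪ V') := by ext z; simp; tauto
      rw [h]
      exact NF.basic _ _ (hUo.inter hUo')
        (QuasiSeparatedSpace.inter_isCompact U U' hUo hUc hUo' hUc')
        (hVo.union hVo') (hVc.union hVc')
    | union a b _ _ iha ihb =>
      rw [inter_union_distrib_left]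
      exact NF.union _ _ iha ihb
  | union a b _ _ iha ihb =>
    rw [union_inter_distrib_right]
    exact NF.union _ _ (iha ht) (ihb ht)

lemma NF.compl [CompactSpace X] [QuasiSeparatedSpace X] {s : Set X} (hs : NF s) : NF sᶜ := by
  induction hs with
  | basic U V hUo hUc hVo hVc =>
    have h : (U \ V)ᶜ = (univ \ U) ∪ (V \ ∅) := by ext z; simp; tauto
    rw [h]
    exact NF.union _ _ (NF.basic _ _ isOpen_univ isCompact_univ hUo hUc)
      (NF.basic _ _ hVo hVc isOpen_empty isCompact_empty)
  | union a b _ _ iha ihb =>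
    rw [compl_union]
    exact iha.inter ihb

lemma IsCons.nf [CompactSpace X] [QuasiSeparatedSpace X] {s : Set X} (hs : IsCons s) :
    NF s := by
  induction hs with
  | retroOpen U hUo hretro =>
    have hUc : IsCompact U := by simpa using hretro univ isOpen_univ isCompact_univ
    have h : U = U \ ∅ := by simp
    rw [h]
    exact NF.basic _ _ hUo hUc isOpen_empty isCompact_empty
  | compl s _ ih => exact ih.compl
  | union s t _ _ ihs iht => exact NF.union _ _ ihs iht

lemma NF.exists_basic {L : Set X} (hL : NF L) {x : X} (hx : x ∈ L) :
    ∃ U V : Set X, IsOpen U ∧ IsCompact U ∧ IsOpen V ∧ IsCompact V ∧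
      x ∈ U \ V ∧ U \ V ⊆ L := by
  induction hL with
  | basic U V hUo hUc hVo hVc =>
    exact ⟨U, V, hUo, hUc, hVo, hVc, hx, subset_rfl⟩
  | union a b ha hb iha ihb =>
    rcases hx with hx | hx
    · obtain ⟨U, V, h1, h2, h3, h4, h5, h6⟩ := iha hx
      exact ⟨U, V, h1, h2, h3, h4, h5, h6.trans subset_union_left⟩
    · obtain ⟨U, V, h1, h2, h3, h4, h5, h6⟩ := ihb hx
      exact ⟨U, V, h1, h2, h3, h4, h5, h6.trans subset_union_right⟩

lemma isCons_biInter {ι : Type*} (t : Finset ι) [CompactSpace X] {g : ι → Set X}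
    (h : ∀ i ∈ t, IsCons (g i)) : IsCons (⋂ i ∈ t, g i) := by
  classical
  induction t using Finset.induction with
  | empty => simpa using (isCons_univ : IsCons (univ : Set X))
  | @insert a s hni ih =>
    rw [Finset.set_biInter_insert]
    exact (h a (Finset.mem_insert_self a s)).inter
      (ih fun i hi => h i (Finset.mem_insert_of_mem hi))

lemma isCons_biUnion {ι : Type*} (t : Finset ι) {g : ι → Set X}
    (h : ∀ i ∈ t, IsCons (g i)) : IsCons (⋃ i ∈ t, g i) := by
  classical
  induction t using Finset.induction with
  | empty => simpa using (isCons_empty : IsCons (∅ : Set X))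
  | @insert a s hni ih =>
    rw [Finset.set_biUnion_insert]
    exact IsCons.union _ _ (h a (Finset.mem_insert_self a s))
      (ih fun i hi => h i (Finset.mem_insert_of_mem hi))

/-- Constructible sets separate points in a T0 space with a basis of qc opens. -/
lemma eq_of_forall_isCons [T0Space X] [QuasiSeparatedSpace X]
    (hbasis : TopologicalSpace.IsTopologicalBasis {U : Set X | IsOpen U ∧ IsCompact U})
    {y z : X} (h : ∀ C : Set X, IsCons C → y ∈ C → z ∈ C) : z = y := by
  by_contra hne
  obtain ⟨O, hOo, hxor⟩ := exists_isOpen_xor'_mem (show y ≠ z from fun e => hne e.symm)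
  rcases hxor with ⟨hyO, hzO⟩ | ⟨hzO, hyO⟩
  · obtain ⟨W, hW, hyW, hWO⟩ := hbasis.exists_subset_of_mem_open hyO hOo
    exact hzO (hWO (h W (isCons_of_qc hW.1 hW.2) hyW))
  · obtain ⟨W, hW, hzW, hWO⟩ := hbasis.exists_subset_of_mem_open hzO hOo
    have hyWc : y ∈ Wᶜ := fun hyW => hyO (hWO hyW)
    exact (h Wᶜ (IsCons.compl _ (isCons_of_qc hW.1 hW.2)) hyWc) hzW

end Aux

section Patch

variable {X Y : Type*} [TopologicalSpace X] [TopologicalSpace Y]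

/-- The patch (constructible) topology. -/
def patchTop (X : Type*) [TopologicalSpace X] : TopologicalSpace X :=
  generateFrom ({U : Set X | IsOpen U ∧ IsCompact U} ∪
    {s : Set X | ∃ U : Set X, IsOpen U ∧ IsCompact U ∧ s = Uᶜ})

lemma patch_open_qc {U : Set X} (h1 : IsOpen U) (h2 : IsCompact U) :
    IsOpen[patchTop X] U :=
  TopologicalSpace.GenerateOpen.basic _ (Or.inl ⟨h1, h2⟩)

lemma patch_open_qc_compl {U : Set X} (h1 : IsOpen U) (h2 : IsCompact U) :
    IsOpen[patchTop X] Uᶜ :=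
  TopologicalSpace.GenerateOpen.basic _ (Or.inr ⟨U, h1, h2, rfl⟩)

lemma IsCons.patch_clopen [CompactSpace X] {s : Set X} (h : IsCons s) :
    IsOpen[patchTop X] s ∧ IsOpen[patchTop X] sᶜ := by
  induction h with
  | retroOpen U hU hr =>
    have hc : IsCompact U := by simpa using hr univ isOpen_univ isCompact_univ
    exact ⟨patch_open_qc hU hc, patch_open_qc_compl hU hc⟩
  | compl s _ ih =>
    exact ⟨ih.2, by simpa [compl_compl] using ih.1⟩
  | union s t _ _ ihs iht =>
    refine ⟨@IsOpen.union X s t (patchTop X) ihs.1 iht.1, ?_⟩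
    rw [compl_union]
    exact @IsOpen.inter X (patchTop X) sᶜ tᶜ ihs.2 iht.2

lemma IsCons.preimage [CompactSpace Y] [QuasiSeparatedSpace X]
    {f : X → Y} (hcont : Continuous f)
    (hqc : ∀ V : Set Y, IsOpen V → IsCompact V → IsCompact (f ⁻¹' V))
    {C : Set Y} (h : IsCons C) : IsCons (f ⁻¹' C) := by
  induction h with
  | retroOpen U hUo hr =>
    have hUc : IsCompact U := by simpa using hr univ isOpen_univ isCompact_univ
    exact isCons_of_qc (hUo.preimage hcont) (hqc U hUo hUc)
  | compl s _ ih => exact IsCons.compl _ ih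
  | union s t _ _ ihs iht => exact IsCons.union _ _ ihs iht

lemma patch_continuous {f : X → Y} (hcont : Continuous f)
    (hqc : ∀ V : Set Y, IsOpen V → IsCompact V → IsCompact (f ⁻¹' V)) :
    Continuous[patchTop X, patchTop Y] f := by
  have h : ∀ s ∈ ({U : Set Y | IsOpen U ∧ IsCompact U} ∪
      {s : Set Y | ∃ U : Set Y, IsOpen U ∧ IsCompact U ∧ s = Uᶜ}),
      IsOpen[patchTop X] (f ⁻¹' s) := by
    rintro s (⟨hso, hsc⟩ | ⟨U, hUo, hUc, rfl⟩)
    · exact patch_open_qc (hso.preimage hcont) (hqc s hso hsc)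
    · rw [preimage_compl]
      exact patch_open_qc_compl (hUo.preimage hcont) (hqc U hUo hUc)
  exact continuous_generateFrom_iff.mpr h

/-- Hochster: the patch topology on a spectral space is compact. -/
lemma patch_compactSpace [CompactSpace X] [QuasiSober X] [QuasiSeparatedSpace X] :
    @CompactSpace X (patchTop X) := by
  refine @CompactSpace.mk X (patchTop X) ?_
  rw [@isCompact_iff_ultrafilter_le_nhds X (patchTop X)]
  intro F _
  -- the closed set of points avoiding all qc opens not in F
  set Z : Set X := {x | ∀ U : Set X, IsOpen U → IsCompact U → U ∉ F → x ∉ U} with hZ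
  have hZc : IsClosed Z := by
    have h : Z = ⋂ U : {U : Set X // IsOpen U ∧ IsCompact U ∧ U ∉ F}, (U : Set X)ᶜ := by
      ext z; simp [hZ]
    rw [h]
    exact isClosed_iInter fun U => IsOpen.isClosed_compl U.prop.1
  set P : Set X → Prop :=
    fun C => ∀ V : Set X, IsOpen V → IsCompact V → V ∈ F → (C ∩ V).Nonempty with hP
  have hPZ : P Z := by
    intro V hVo hVc hVF
    by_contra hemp
    rw [Set.not_nonempty_iff_eq_empty] at hemp
    have hcover : V ⊆ ⋃ U : {U : Set X // IsOpen U ∧ IsCompact U ∧ U ∉ F}, (U : Set X) := by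
      intro v hv
      have hvZ : v ∉ Z := fun hvZ => (Set.eq_empty_iff_forall_notMem.mp hemp v) ⟨hvZ, hv⟩
      simp only [hZ, mem_setOf_eq, not_forall] at hvZ
      obtain ⟨U, hUo, hUc, hUF, hvU⟩ := hvZ
      rw [not_not] at hvU
      exact mem_iUnion.mpr ⟨⟨U, hUo, hUc, hUF⟩, hvU⟩
    obtain ⟨t, ht⟩ := hVc.elim_finite_subcover _ (fun U : {U : Set X // IsOpen U ∧ IsCompact U ∧ U ∉ F} => U.2.1) hcover
    have hmem : (⋃ U ∈ t, (U : Set X)) ∈ F := Filter.mem_of_superset hVF ht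
    obtain ⟨U, _, hUF⟩ := (Ultrafilter.finite_biUnion_mem_iff t.finite_toSet).mp hmem
    exact U.2.2.2 hUF
  -- Zorn: a minimal closed subset of Z with property P
  have hchainlb : ∀ c ⊆ {C : Set X | IsClosed C ∧ C ⊆ Z ∧ P C}, IsChain (· ⊆ ·) c →
      ∃ lb ∈ {C : Set X | IsClosed C ∧ C ⊆ Z ∧ P C}, ∀ s ∈ c, lb ⊆ s := by
    intro c hcS hchain
    rcases c.eq_empty_or_nonempty with rfl | ⟨C₀, hC₀⟩
    · exact ⟨Z, ⟨hZc, subset_rfl, hPZ⟩, by simp⟩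
    refine ⟨⋂₀ c, ⟨isClosed_sInter fun C hC => (hcS hC).1,
      (sInter_subset_of_mem hC₀).trans (hcS hC₀).2.1, ?_⟩, fun s hs => sInter_subset_of_mem hs⟩
    intro V hVo hVc hVF
    by_contra hemp
    rw [Set.not_nonempty_iff_eq_empty] at hemp
    have hcover : V ⊆ ⋃ C : c, (C : Set X)ᶜ := by
      intro v hv
      by_contra hvn
      simp only [mem_iUnion, not_exists, mem_compl_iff, not_not] at hvn
      exact (Set.eq_empty_iff_forall_notMem.mp hemp v)
        ⟨fun C hC => hvn ⟨C, hC⟩, hv⟩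
    haveI : Nonempty c := ⟨⟨C₀, hC₀⟩⟩
    have hdir : Directed (· ⊆ ·) (fun C : c => (C : Set X)ᶜ) := by
      intro C D
      rcases hchain.total C.2 D.2 with h | h
      · exact ⟨⟨C, C.2⟩, subset_rfl, compl_subset_compl.mpr h⟩
      · exact ⟨⟨D, D.2⟩, compl_subset_compl.mpr h, subset_rfl⟩
    obtain ⟨C, hC⟩ := hVc.elim_directed_cover _ (fun C : c => (hcS C.2).1.isOpen_compl)
      hcover hdir
    obtain ⟨z, hz⟩ := (hcS C.2).2.2 V hVo hVc hVF
    exact (hC hz.2) hz.1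
  obtain ⟨m, hm⟩ := zorn_superset {C : Set X | IsClosed C ∧ C ⊆ Z ∧ P C} hchainlb
  obtain ⟨hmcl, hmZ, hmP⟩ := hm.prop
  -- m is irreducible
  have hne : m.Nonempty := by
    obtain ⟨z, hz⟩ := hmP univ isOpen_univ isCompact_univ Filter.univ_mem
    exact ⟨z, hz.1⟩
  have hkey : ∀ u : Set X, IsOpen u → (m ∩ u).Nonempty →
      ∃ V : Set X, IsOpen V ∧ IsCompact V ∧ V ∈ F ∧ m ∩ V ⊆ u := by
    intro u hu hmu
    by_contra hcon
    push_neg at hcon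
    have hPm' : P (m ∩ uᶜ) := by
      intro V hVo hVc hVF
      obtain ⟨z, hz1, hz2⟩ := not_subset.mp (hcon V hVo hVc hVF)
      exact ⟨z, ⟨⟨hz1.1, hz2⟩, hz1.2⟩⟩
    have hS' : (m ∩ uᶜ) ∈ {C : Set X | IsClosed C ∧ C ⊆ Z ∧ P C} :=
      ⟨hmcl.inter hu.isClosed_compl, inter_subset_left.trans hmZ, hPm'⟩
    have hsub : m ⊆ m ∩ uᶜ := hm.2 hS' inter_subset_left
    obtain ⟨z, hzm, hzu⟩ := hmu
    exact (hsub hzm).2 hzu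
  have hpre : IsPreirreducible m := by
    intro u v hu hv hmu hmv
    obtain ⟨V₁, hV₁o, hV₁c, hV₁F, hV₁u⟩ := hkey u hu hmu
    obtain ⟨V₂, hV₂o, hV₂c, hV₂F, hV₂v⟩ := hkey v hv hmv
    obtain ⟨z, hzm, hzV⟩ := hmP (V₁ ∩ V₂) (hV₁o.inter hV₂o)
      (QuasiSeparatedSpace.inter_isCompact _ _ hV₁o hV₁c hV₂o hV₂c)
      (Filter.inter_mem hV₁F hV₂F)
    exact ⟨z, hzm, hV₁u ⟨hzm, hzV.1⟩, hV₂v ⟨hzm, hzV.2⟩⟩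
  obtain ⟨ξ, hξ⟩ := QuasiSober.sober ⟨hne, hpre⟩ hmcl
  refine ⟨ξ, mem_univ ξ, ?_⟩
  have hξm : ξ ∈ m := by rw [← hξ]; exact subset_closure rfl
  show (F : Filter X) ≤ @nhds X (patchTop X) ξ
  unfold patchTop
  rw [nhds_generateFrom]
  refine le_iInf fun s => le_iInf fun hs => ?_
  obtain ⟨hξs, hsg⟩ := hs
  rw [Filter.le_principal_iff]
  rcases hsg with ⟨hso, hsc⟩ | ⟨U, hUo, hUc, rfl⟩
  · by_contra hsF
    exact (hmZ hξm) s hso hsc hsF hξs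
  · by_contra hF
    have hUF : U ∈ F := by
      by_contra h'
      exact hF (Ultrafilter.compl_mem_iff_notMem.mpr h')
    obtain ⟨z, hzm, hzU⟩ := hmP U hUo hUc hUF
    rw [← hξ] at hzm
    obtain ⟨w, hwU, hw⟩ := mem_closure_iff.mp hzm U hUo hzU
    rw [mem_singleton_iff] at hw
    exact hξs (hw ▸ hwU)

end Patch

section Key

variable {X Y : Type*} [TopologicalSpace X] [TopologicalSpace Y]

/-- The key local statement: if `x ∈ W \ V` with `W`, `V` qc open and `x` is the only point
of its fiber in `W`, then `f (W \ V)` contains a constructible neighborhood of `f x`. -/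
lemma key_lemma [CompactSpace X] [QuasiSober X] [QuasiSeparatedSpace X]
    [CompactSpace Y] [T0Space Y] [QuasiSeparatedSpace Y]
    (hYbasis : TopologicalSpace.IsTopologicalBasis {U : Set Y | IsOpen U ∧ IsCompact U})
    (f : X → Y) (hcont : Continuous f) (hopen : IsOpenMap f)
    (hqc : ∀ V : Set Y, IsOpen V → IsCompact V → IsCompact (f ⁻¹' V))
    {x : X} {W V : Set X}
    (hWo : IsOpen W) (hWc : IsCompact W) (hVo : IsOpen V) (hVc : IsCompact V)
    (hxW : x ∈ W) (hxV : x ∉ V) (hfib1 : f ⁻¹' {f x} ∩ W ⊆ {x}) :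
    ∃ C : Set Y, IsCons C ∧ f x ∈ C ∧ C ⊆ f '' (W \ V) := by
  classical
  haveI hPC : @CompactSpace X (patchTop X) := patch_compactSpace
  have hclosed : ∀ i : {C : Set Y // IsCons C ∧ f x ∈ C},
      IsClosed[patchTop X] (f ⁻¹' i.1) := by
    intro i
    exact @IsClosed.mk X (patchTop X) _ ((IsCons.preimage hcont hqc i.2.1).patch_clopen.2)
  have hVW : @IsCompact X (patchTop X) (V ∩ W) := by
    have hcl : IsClosed[patchTop X] (V ∩ W) := by
      refine @IsClosed.mk X (patchTop X) _ ?_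
      have h1 := (isCons_of_qc hVo hVc).patch_clopen.2
      have h2 := (isCons_of_qc hWo hWc).patch_clopen.2
      have heq : (V ∩ W)ᶜ = Vᶜ ∪ Wᶜ := by rw [compl_inter]
      rw [heq]
      exact @IsOpen.union X _ _ (patchTop X) h1 h2
    exact @IsClosed.isCompact X (patchTop X) (V ∩ W) hPC hcl
  have hempty : (V ∩ W) ∩ ⋂ i : {C : Set Y // IsCons C ∧ f x ∈ C}, f ⁻¹' i.1 = ∅ := by
    rw [Set.eq_empty_iff_forall_notMem]
    rintro z ⟨⟨hzV, hzW⟩, hz⟩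
    rw [mem_iInter] at hz
    have hfz : f z = f x := by
      refine eq_of_forall_isCons hYbasis fun C hC hyC => ?_
      exact hz ⟨C, hC, hyC⟩
    have : z = x := hfib1 ⟨by rw [mem_preimage, hfz]; exact rfl, hzW⟩
    exact hxV (this ▸ hzV)
  obtain ⟨t, ht⟩ := @IsCompact.elim_finite_subfamily_closed X (patchTop X) (V ∩ W)
    {C : Set Y // IsCons C ∧ f x ∈ C} hVW _ hclosed hempty
  refine ⟨(⋂ i ∈ t, i.1) ∩ f '' W, ?_, ?_, ?_⟩
  · exact (isCons_biInter t fun i _ => i.2.1).inter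
      (isCons_of_qc (hopen W hWo) (hWc.image hcont))
  · exact ⟨mem_iInter₂.mpr fun i _ => i.2.2, ⟨x, hxW, rfl⟩⟩
  · rintro y' ⟨hy'I, x', hx'W, rfl⟩
    refine ⟨x', ⟨hx'W, fun hx'V => ?_⟩, rfl⟩
    have : x' ∈ (V ∩ W) ∩ ⋂ i ∈ t, f ⁻¹' i.1 := by
      refine ⟨⟨hx'V, hx'W⟩, mem_iInter₂.mpr fun i hi => ?_⟩
      exact mem_preimage.mpr (mem_iInter₂.mp hy'I i hi)
    rw [Set.eq_empty_iff_forall_notMem] at ht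
    exact ht x' this

end Key

/-- Let `X`, `Y` be spectral spaces (quasi-compact, T0, sober, quasi-separated, with the
quasi-compact open sets forming a basis) and `f : X → Y` a continuous open map such that
preimages of quasi-compact open sets are quasi-compact and all fibers are finite discrete.
Then images of constructible sets under `f` are constructible. -/
theorem image_constructible {X Y : Type*} [TopologicalSpace X] [TopologicalSpace Y]
    [CompactSpace X] [T0Space X] [QuasiSober X] [QuasiSeparatedSpace X]
    (hXbasis : TopologicalSpace.IsTopologicalBasis {U : Set X | IsOpen U ∧ IsCompact U})
    [CompactSpace Y] [T0Space Y] [QuasiSober Y] [QuasiSeparatedSpace Y]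
    (hYbasis : TopologicalSpace.IsTopologicalBasis {U : Set Y | IsOpen U ∧ IsCompact U})
    (f : X → Y) (hcont : Continuous f) (hopen : IsOpenMap f)
    (hqc : ∀ V : Set Y, IsOpen V → IsCompact V → IsCompact (f ⁻¹' V))
    (hfib : ∀ y : Y, (f ⁻¹' {y}).Finite ∧ DiscreteTopology (f ⁻¹' {y}))
    (L : Set X) (hL : IsCons L) :
    IsCons (f '' L) := by
  classical
  have hNF : NF L := hL.nf
  -- for every point of L, a constructible neighborhood of its image inside f '' L
  have hstep : ∀ x ∈ L, ∃ C : Set Y, IsCons C ∧ f x ∈ C ∧ C ⊆ f '' L := by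
    intro x hx
    obtain ⟨U, V, hUo, hUc, hVo, hVc, hxUV, hsubL⟩ := hNF.exists_basic hx
    -- the fiber of f x is discrete: isolate x
    haveI := (hfib (f x)).2
    have hxfib : x ∈ f ⁻¹' {f x} := rfl
    have hopen_sing : IsOpen ({(⟨x, hxfib⟩ : f ⁻¹' {f x})} : Set (f ⁻¹' {f x})) :=
      isOpen_discrete _
    obtain ⟨O, hOo, hOeq⟩ := isOpen_induced_iff.mp hopen_sing
    have hxO : x ∈ O := by
      have : (⟨x, hxfib⟩ : f ⁻¹' {f x}) ∈ Subtype.val ⁻¹' O := by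
        rw [hOeq]; rfl
      exact this
    -- a qc open neighborhood of x inside O ∩ U
    obtain ⟨W, hW, hxW, hWsub⟩ := hXbasis.exists_subset_of_mem_open
      (show x ∈ O ∩ U from ⟨hxO, hxUV.1⟩) (hOo.inter hUo)
    have hfib1 : f ⁻¹' {f x} ∩ W ⊆ {x} := by
      rintro z ⟨hz1, hz2⟩
      have hzO : z ∈ O := (hWsub hz2).1
      have : (⟨z, hz1⟩ : f ⁻¹' {f x}) ∈ Subtype.val ⁻¹' O := hzO
      rw [hOeq, mem_singleton_iff] at this
      have := congrArg Subtype.val this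
      simpa using this
    obtain ⟨C, hC, hyC, hCsub⟩ := key_lemma hYbasis f hcont hopen hqc
      hW.1 hW.2 hVo hVc hxW hxUV.2 hfib1
    refine ⟨C, hC, hyC, hCsub.trans ?_⟩
    refine (image_mono (f := f) ?_).trans (image_mono (f := f) hsubL)
    intro z hz
    exact ⟨(hWsub hz.1).2, hz.2⟩
  choose! g hg1 hg2 hg3 using hstep
  -- patch-compactness of f '' L
  haveI hPC : @CompactSpace X (patchTop X) := patch_compactSpace
  have hLclosed : IsClosed[patchTop X] L := @IsClosed.mk X (patchTop X) L hL.patch_clopen.2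
  have hLcompact : @IsCompact X (patchTop X) L :=
    @IsClosed.isCompact X (patchTop X) L hPC hLclosed
  have himg : @IsCompact Y (patchTop Y) (f '' L) :=
    @IsCompact.image X Y (patchTop X) (patchTop Y) L f hLcompact
      (patch_continuous hcont hqc)
  have hcover : f '' L ⊆ ⋃ i : {x : X // x ∈ L}, g i.1 := by
    rintro y' ⟨x, hx, rfl⟩
    exact mem_iUnion.mpr ⟨⟨x, hx⟩, hg2 x hx⟩
  obtain ⟨t, ht⟩ := @IsCompact.elim_finite_subcover Y (patchTop Y) (f '' L)
    {x : X // x ∈ L} himg (fun i => g i.1)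
    (fun i => ((hg1 i.1 i.2).patch_clopen).1) hcover
  have heq : f '' L = ⋃ i ∈ t, g i.1 := by
    refine subset_antisymm ht ?_
    refine iUnion₂_subset fun i _ => hg3 i.1 i.2
  rw [heq]
  exact isCons_biUnion t fun i _ => hg1 i.1 i.2
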